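/- Let K be a field, and let λ₀ = 1, λ₁, …, λ_{n-2} ∈ K \ {0} be pairwise distinct. Let I ⊂ K[x₀,…,x_n] be the ideal generated by f_i = λ_i x₀^k + x₁^k + x_{i+2}^k for 0 ≤ i ≤ n-2, where k ≥ 1 and char K does not divide k. If a point P = [x₀ : ⋯ : x_n] of the projective variety V(I) has x_i = x_j = 0 for some i ≠ j, then x_t = 0 for all t, i.e., no point of projective space lies on the variety with two vanishing coordinates. -/
import Mathlib


/-- Let `K` be a field, `λ₀ = 1, λ₁, …, λ_{n-2} ∈ K \ {0}` pairwise distinct, and let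
`F_{k,n}` be defined by the equations `f_i = λ_i x₀^k + x₁^k + x_{i+2}^k` (`0 ≤ i ≤ n-2`),
where `k ≥ 1` and `char K ∤ k`. If a point `[x₀ : ⋯ : x_n]` of the variety has
`x_i = x_j = 0` for some `i ≠ j`, then `x_t = 0` for all `t`; i.e. no point of projective
space lies on the variety with two vanishing coordinates. -/
theorem stmt_6 (K : Type*) [Field K] (n k : ℕ) (hn : 2 ≤ n) (hk : 1 ≤ k)
    (hchar : (k : K) ≠ 0)
    (lam : ℕ → K) (hlam0 : lam 0 = 1) (hlamne : ∀ i ≤ n - 2, lam i ≠ 0)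
    (hdist : ∀ i ≤ n - 2, ∀ j ≤ n - 2, i ≠ j → lam i ≠ lam j)
    (x : ℕ → K)
    (hcurve : ∀ i ≤ n - 2, lam i * (x 0) ^ k + (x 1) ^ k + (x (i + 2)) ^ k = 0)
    (i j : ℕ) (hi : i ≤ n) (hj : j ≤ n) (hij : i ≠ j) (hxi : x i = 0) (hxj : x j = 0) :
    ∀ t ≤ n, x t = 0 := by
  have hk' : k ≠ 0 := by omega
  -- helper: once x0 = x1 = 0, everything vanishes
  have main : x 0 = 0 → x 1 = 0 → ∀ t ≤ n, x t = 0 := by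
    intro h0 h1 t ht
    match t with
    | 0 => exact h0
    | 1 => exact h1
    | (m+2) =>
      have hm : m ≤ n - 2 := by omega
      have h := hcurve m hm
      rw [h0, h1, zero_pow hk'] at h
      have : (x (m+2)) ^ k = 0 := by linear_combination h
      exact pow_eq_zero_iff hk' |>.mp this
  -- hA : x_{m+2} = 0 and x0 = 0 implies x1 = 0
  have hA : ∀ m, m + 2 ≤ n → x (m+2) = 0 → x 0 = 0 → x 1 = 0 := by
    intro m hm hx2 h0
    have h := hcurve m (by omega)
    rw [hx2, h0, zero_pow hk'] at h
    have : (x 1) ^ k = 0 := by linear_combination h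
    exact pow_eq_zero_iff hk' |>.mp this
  -- hB : x_{m+2} = 0 and x1 = 0 implies x0 = 0
  have hB : ∀ m, m + 2 ≤ n → x (m+2) = 0 → x 1 = 0 → x 0 = 0 := by
    intro m hm hx2 h1
    have h := hcurve m (by omega)
    rw [hx2, h1, zero_pow hk'] at h
    have h' : lam m * (x 0) ^ k = 0 := by linear_combination h
    rcases mul_eq_zero.mp h' with h'' | h''
    · exact absurd h'' (hlamne m (by omega))
    · exact pow_eq_zero_iff hk' |>.mp h''
  -- hC : x_{a+2} = x_{b+2} = 0, a ≠ b implies x0 = 0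
  have hC : ∀ a b, a + 2 ≤ n → b + 2 ≤ n → a ≠ b → x (a+2) = 0 → x (b+2) = 0 →
      x 0 = 0 := by
    intro a b ha hb hab hxa hxb
    have h1 := hcurve a (by omega)
    have h2 := hcurve b (by omega)
    rw [hxa, zero_pow hk'] at h1
    rw [hxb, zero_pow hk'] at h2
    have h' : (lam a - lam b) * (x 0) ^ k = 0 := by linear_combination h1 - h2
    rcases mul_eq_zero.mp h' with h'' | h''
    · exact absurd (sub_eq_zero.mp h'') (hdist a (by omega) b (by omega) hab)
    · exact pow_eq_zero_iff hk' |>.mp h''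
  match i, j, hij with
  | 0, 0, hij => exact absurd rfl hij
  | 0, 1, _ => exact main hxi hxj
  | 0, (m+2), _ => exact main hxi (hA m hj hxj hxi)
  | 1, 0, _ => exact main hxj hxi
  | 1, 1, hij => exact absurd rfl hij
  | 1, (m+2), _ => exact main (hB m hj hxj hxi) hxi
  | (m+2), 0, _ => exact main hxj (hA m hi hxi hxj)
  | (m+2), 1, _ => exact main (hB m hi hxi hxj) hxj
  | (a+2), (b+2), hij =>
    have h0 := hC a b hi hj (by omega) hxi hxj
    exact main h0 (hA a hi hxi h0)
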